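/- Let WN = (P,T,F,i,o) be a sound acyclic free-choice workflow net (AFW-net). For every transition y ∈ T, every node x with (x,y) ∈ ∥, and every place s ∈ y•: there is no acyclic path from x to s if and only if (x,s) ∈ ∥. -/

import Mathlib

/-- A Petri net: finite disjoint sets of places and transitions and a flow relation
`F ⊆ (P × T) ∪ (T × P)`. -/
structure PetriNet (α : Type) [DecidableEq α] where
  places : Finset α
  transitions : Finset α
  flow : Finset (α × α)
  disjoint_pt : Disjoint places transitions
  flow_mem : ∀ e ∈ flow,
    (e.1 ∈ places ∧ e.2 ∈ transitions) ∨ (e.1 ∈ transitions ∧ e.2 ∈ places)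

namespace PetriNet

variable {α : Type} [DecidableEq α]

/-- All nodes `P ∪ T` of the net. -/
def nodes (N : PetriNet α) : Finset α := N.places ∪ N.transitions

/-- The preset `•x` of a node. -/
def preset (N : PetriNet α) (x : α) : Finset α :=
  N.nodes.filter (fun p => (p, x) ∈ N.flow)

/-- The postset `x•` of a node. -/
def postset (N : PetriNet α) (x : α) : Finset α :=
  N.nodes.filter (fun s => (x, s) ∈ N.flow)

/-- A path: a nonempty sequence of nodes, each consecutive pair related by the flow. -/
def IsPath (N : PetriNet α) (w : List α) : Prop :=
  w ≠ [] ∧ (∀ x ∈ w, x ∈ N.nodes) ∧ w.Chain' (fun a b => (a, b) ∈ N.flow)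

/-- An acyclic path: a path whose nodes are pairwise distinct. -/
def IsAcyclicPath (N : PetriNet α) (w : List α) : Prop :=
  N.IsPath w ∧ w.Nodup

/-- There is an acyclic path from `x` to `y`. -/
def HasAcyclicPath (N : PetriNet α) (x y : α) : Prop :=
  ∃ w, N.IsAcyclicPath w ∧ w.head? = some x ∧ w.getLast? = some y

/-- `HasPath(x)`: the set of all nodes to which `x` has an acyclic path
(including `x` itself, via the trivial path `(x)` when `x` is a node). -/
def HasPathSet (N : PetriNet α) (x : α) : Set α := {y | N.HasAcyclicPath x y}

/-- A net is acyclic iff no node has a nontrivial path to itself. -/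
def Acyclic (N : PetriNet α) : Prop :=
  ∀ x, ¬ ∃ w, N.IsPath w ∧ 2 ≤ w.length ∧ w.head? = some x ∧ w.getLast? = some x

/-- A transition `t` is enabled in marking `M` iff all its input places carry a token. -/
def Enabled (N : PetriNet α) (M : α → ℕ) (t : α) : Prop :=
  t ∈ N.transitions ∧ ∀ p ∈ N.preset t, 1 ≤ M p

/-- Firing `t` consumes one token from each input place and produces one on each output place. -/
def fire (N : PetriNet α) (M : α → ℕ) (t : α) : α → ℕ := fun p =>
  (M p - (if p ∈ N.preset t then 1 else 0)) + (if p ∈ N.postset t then 1 else 0)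

/-- A step `M —t→ M'`. -/
def Step (N : PetriNet α) (M : α → ℕ) (t : α) (M' : α → ℕ) : Prop :=
  N.Enabled M t ∧ M' = N.fire M t

/-- Reachability via finite occurrence sequences. -/
def Reachable (N : PetriNet α) : (α → ℕ) → (α → ℕ) → Prop :=
  Relation.ReflTransGen (fun M M' => ∃ t, N.Step M t M')

/-- Liveness with respect to an initial marking. -/
def Live (N : PetriNet α) (M₀ : α → ℕ) : Prop :=
  ∀ M, N.Reachable M₀ M → ∀ t ∈ N.transitions, ∃ M', N.Reachable M M' ∧ N.Enabled M' t

/-- Boundedness with respect to an initial marking. -/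
def Bounded (N : PetriNet α) (M₀ : α → ℕ) : Prop :=
  ∃ n : ℕ, ∀ M, N.Reachable M₀ M → ∀ p ∈ N.places, M p ≤ n

/-- Free-choice: every place with more than one output transition is the unique
input of each of those transitions. -/
def FreeChoice (N : PetriNet α) : Prop :=
  ∀ p ∈ N.places, 1 < (N.postset p).card → ∀ t ∈ N.postset p, N.preset t = {p}

/-- A node is active in `M` iff it is a place carrying a token or an enabled transition. -/
def Active (N : PetriNet α) (x : α) (M : α → ℕ) : Prop :=
  (x ∈ N.places ∧ 1 ≤ M x) ∨ (x ∈ N.transitions ∧ N.Enabled M x)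

/-- One unfolding of the defining clauses of the concurrency relation. -/
def concStep (N : PetriNet α) (M₀ : α → ℕ) (R : Set (α × α)) : Set (α × α) :=
  {q | q.1 ≠ q.2 ∧
    (∃ M, N.Reachable M₀ M ∧ N.Active q.1 M ∧ N.Active q.2 M) ∧
    (q.1 ∈ N.transitions → q.2 ∈ N.places → ∀ z ∈ N.preset q.1, (z, q.2) ∈ R) ∧
    (q.1 ∈ N.places → q.2 ∈ N.transitions → ∀ z ∈ N.preset q.2, (z, q.1) ∈ R) ∧
    (q.1 ∈ N.transitions → q.2 ∈ N.transitions →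
      ∀ z ∈ N.preset q.1, ∀ z' ∈ N.preset q.2, (z, z') ∈ R)}

/-- The concurrency relation `∥`: the greatest relation consistent with its
defining clauses (Def. of concurrency). -/
def Concurrent (N : PetriNet α) (M₀ : α → ℕ) : Set (α × α) :=
  ⋃₀ {R | R ⊆ N.concStep M₀ R}

/-- The number of places on `w` carrying at least one token in `M`. -/
def tokensOn (N : PetriNet α) (M : α → ℕ) (w : List α) : ℕ :=
  (w.toFinset.filter (fun p => p ∈ N.places ∧ 1 ≤ M p)).card

end PetriNet

/-- A workflow net: a Petri net with a source place `i` (`•i = ∅`), a sink place `o`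
(`o• = ∅`), and every node on a path from `i` to `o`. -/
structure WorkflowNet (α : Type) [DecidableEq α] extends PetriNet α where
  source : α
  sink : α
  source_mem : source ∈ places
  sink_mem : sink ∈ places
  source_no_pre : toPetriNet.preset source = ∅
  sink_no_post : toPetriNet.postset sink = ∅
  all_on_path : ∀ x ∈ toPetriNet.nodes, ∃ w, toPetriNet.IsPath w ∧
    w.head? = some source ∧ w.getLast? = some sink ∧ x ∈ w

namespace WorkflowNet

variable {α : Type} [DecidableEq α]

/-- The initial marking: one token on the source, none elsewhere. -/
def initialMarking (W : WorkflowNet α) : α → ℕ := fun p => if p = W.source then 1 else 0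

/-- The terminal marking: one token on the sink, none elsewhere. -/
def terminalMarking (W : WorkflowNet α) : α → ℕ := fun p => if p = W.sink then 1 else 0

/-- Soundness of a workflow net. -/
def Sound (W : WorkflowNet α) : Prop :=
  (∀ M, W.toPetriNet.Reachable W.initialMarking M →
    W.toPetriNet.Reachable M W.terminalMarking ∧ (1 ≤ M W.sink → M = W.terminalMarking)) ∧
  (∀ t ∈ W.transitions, ∃ M M', W.toPetriNet.Reachable W.initialMarking M ∧
    W.toPetriNet.Step M t M')

end WorkflowNet


section Aux

open PetriNet

variable {α : Type} [DecidableEq α]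

namespace CP

/-- Marking after firing a list of transitions. -/
def runMark (N : PetriNet α) : (α → ℕ) → List α → (α → ℕ)
  | M, [] => M
  | M, t :: ts => runMark N (N.fire M t) ts

/-- Validity of a firing sequence. -/
def ValidRun (N : PetriNet α) : (α → ℕ) → List α → Prop
  | _, [] => True
  | M, t :: ts => N.Enabled M t ∧ ValidRun N (N.fire M t) ts

/-- Number of deposits into `p`. -/
def deps (N : PetriNet α) (p : α) (ts : List α) : ℕ :=
  ts.countP (fun t => decide (p ∈ N.postset t))

/-- Number of consumptions from `p`. -/
def cns (N : PetriNet α) (p : α) (ts : List α) : ℕ :=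
  ts.countP (fun t => decide (p ∈ N.preset t))

lemma runMark_append (N : PetriNet α) (M : α → ℕ) (xs ys : List α) :
    runMark N M (xs ++ ys) = runMark N (runMark N M xs) ys := by
  induction xs generalizing M with
  | nil => rfl
  | cons t ts ih => simp [runMark, ih]

lemma validRun_append (N : PetriNet α) (M : α → ℕ) (xs ys : List α) :
    ValidRun N M (xs ++ ys) ↔ ValidRun N M xs ∧ ValidRun N (runMark N M xs) ys := by
  induction xs generalizing M with
  | nil => simp [ValidRun, runMark]
  | cons t ts ih => simp [ValidRun, runMark, ih, and_assoc]

lemma deps_append (N : PetriNet α) (p : α) (xs ys : List α) :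
    deps N p (xs ++ ys) = deps N p xs + deps N p ys := by
  simp [deps, List.countP_append]

lemma cns_append (N : PetriNet α) (p : α) (xs ys : List α) :
    cns N p (xs ++ ys) = cns N p xs + cns N p ys := by
  simp [cns, List.countP_append]

lemma deps_cons (N : PetriNet α) (p t : α) (ts : List α) :
    deps N p (t :: ts) = (if p ∈ N.postset t then 1 else 0) + deps N p ts := by
  simp only [deps, List.countP_cons]
  by_cases h : p ∈ N.postset t <;> simp [h] <;> omega

lemma cns_cons (N : PetriNet α) (p t : α) (ts : List α) :
    cns N p (t :: ts) = (if p ∈ N.preset t then 1 else 0) + cns N p ts := by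
  simp only [cns, List.countP_cons]
  by_cases h : p ∈ N.preset t <;> simp [h] <;> omega

/-- The marking equation. -/
lemma marking_eq (N : PetriNet α) (M : α → ℕ) (ts : List α) (h : ValidRun N M ts) (p : α) :
    runMark N M ts p + cns N p ts = M p + deps N p ts := by
  induction ts generalizing M with
  | nil => simp [runMark, deps, cns]
  | cons t ts ih =>
      obtain ⟨hen, hv⟩ := h
      have ihh := ih (N.fire M t) hv
      rw [deps_cons, cns_cons]
      have hfire : N.fire M t p + (if p ∈ N.preset t then 1 else 0)
          = M p + (if p ∈ N.postset t then 1 else 0) := by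
        unfold PetriNet.fire
        by_cases h1 : p ∈ N.preset t
        · have := hen.2 p h1
          simp [h1]; omega
        · simp [h1]
      show runMark N (N.fire M t) ts p + _ = _
      omega

lemma reachable_iff_run (N : PetriNet α) (M M' : α → ℕ) :
    N.Reachable M M' ↔ ∃ ts, ValidRun N M ts ∧ runMark N M ts = M' := by
  constructor
  · intro h
    induction h with
    | refl => exact ⟨[], trivial, rfl⟩
    | tail _ hstep ih =>
        obtain ⟨ts, hv, hm⟩ := ih
        obtain ⟨t, hen, hfire⟩ := hstep
        refine ⟨ts ++ [t], ?_, ?_⟩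
        · rw [validRun_append]
          exact ⟨hv, by rw [hm]; exact ⟨hen, trivial⟩⟩
        · rw [runMark_append, hm]
          exact hfire.symm
  · rintro ⟨ts, hv, hm⟩
    subst hm
    induction ts generalizing M with
    | nil => exact Relation.ReflTransGen.refl
    | cons t ts ih =>
        obtain ⟨hen, hv⟩ := hv
        exact Relation.ReflTransGen.head ⟨t, hen, rfl⟩ (ih _ hv)

lemma run_reachable (N : PetriNet α) {M : α → ℕ} {ts : List α} (h : ValidRun N M ts) :
    N.Reachable M (runMark N M ts) :=
  (reachable_iff_run N M _).mpr ⟨ts, h, rfl⟩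

lemma mem_run_trans (N : PetriNet α) {M : α → ℕ} {ts : List α} (h : ValidRun N M ts)
    {t : α} (ht : t ∈ ts) : t ∈ N.transitions := by
  induction ts generalizing M with
  | nil => cases ht
  | cons a ts ih =>
      rcases List.mem_cons.mp ht with rfl | ht'
      · exact h.1.1
      · exact ih h.2 ht'


lemma countP_pos_split {l : List α} {q : α → Bool} (h : 1 ≤ l.countP q) :
    ∃ l1 a l2, l = l1 ++ a :: l2 ∧ q a := by
  have : ∃ a ∈ l, q a := by
    rw [← List.countP_pos_iff]; omega
  obtain ⟨a, ha, hqa⟩ := this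
  obtain ⟨l1, l2, rfl⟩ := List.append_of_mem ha
  exact ⟨l1, a, l2, rfl, hqa⟩

lemma countP_two_split {l : List α} {q : α → Bool} (h : 2 ≤ l.countP q) :
    ∃ l1 a l2 b l3, l = l1 ++ a :: (l2 ++ b :: l3) ∧ q a ∧ q b := by
  induction l with
  | nil => rw [List.countP_nil] at h; omega
  | cons x xs ih =>
      rw [List.countP_cons] at h
      by_cases hx : q x
      · rw [if_pos hx] at h
        have h1 : 1 ≤ xs.countP q := by omega
        obtain ⟨l2, b, l3, rfl, hb⟩ := countP_pos_split h1
        exact ⟨[], x, l2, b, l3, rfl, hx, hb⟩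
      · rw [if_neg hx] at h
        obtain ⟨l1, a, l2, b, l3, rfl, ha, hb⟩ := ih (by omega)
        exact ⟨x :: l1, a, l2, b, l3, rfl, ha, hb⟩

/-- Successor along a chain for a non-last element. -/
lemma chain_succ {R : α → α → Prop} : ∀ {w : List α} , w.Chain' R → ∀ {x : α}, x ∈ w →
    ∀ {z : α}, w.getLast? = some z → x ≠ z → ∃ y ∈ w, R x y
  | [], _, _, hx, _, _, _ => absurd hx List.not_mem_nil
  | [a], _, x, hx, z, hz, hne => by
      simp at hx hz; subst hx; subst hz; exact absurd rfl hne
  | a :: b :: l, hc, x, hx, z, hz, hne => by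
      rw [List.Chain', List.isChain_cons_cons] at hc
      rcases List.mem_cons.mp hx with rfl | hx'
      · exact ⟨b, by simp, hc.1⟩
      · have hz' : (b :: l).getLast? = some z := by
          rw [← hz]; exact (List.getLast?_cons_cons ..).symm
        obtain ⟨y, hy, hR⟩ := chain_succ hc.2 hx' hz' hne
        exact ⟨y, by simp [hy], hR⟩

/-- Predecessor along a chain for a non-head element. -/
lemma chain_pred {R : α → α → Prop} : ∀ {w : List α}, w.Chain' R → ∀ {x : α}, x ∈ w →
    ∀ {h : α}, w.head? = some h → x ≠ h → ∃ y ∈ w, R y x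
  | [], _, _, hx, _, _, _ => absurd hx List.not_mem_nil
  | [a], _, x, hx, h, hh, hne => by
      simp at hx hh; subst hx; subst hh; exact absurd rfl hne
  | a :: b :: l, hc, x, hx, h, hh, hne => by
      rw [List.Chain', List.isChain_cons_cons] at hc
      simp at hh; subst hh
      rcases List.mem_cons.mp hx with rfl | hx'
      · exact absurd rfl hne
      · by_cases hxb : x = b
        · subst hxb; exact ⟨a, by simp, hc.1⟩
        · obtain ⟨y, hy, hR⟩ := chain_pred hc.2 hx' (by simp) hxb
          exact ⟨y, by simp [hy], hR⟩

/-- The last element of a chain pointing to `z` has a predecessor when length ≥ 2. -/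
lemma mem_nodes_of_places {N : PetriNet α} {x : α} (h : x ∈ N.places) : x ∈ N.nodes :=
  Finset.mem_union_left _ h

lemma mem_nodes_of_trans {N : PetriNet α} {x : α} (h : x ∈ N.transitions) : x ∈ N.nodes :=
  Finset.mem_union_right _ h

lemma mem_preset_iff {N : PetriNet α} {x t : α} :
    x ∈ N.preset t ↔ x ∈ N.nodes ∧ (x, t) ∈ N.flow := by
  simp [PetriNet.preset]

lemma mem_postset_iff {N : PetriNet α} {x t : α} :
    x ∈ N.postset t ↔ x ∈ N.nodes ∧ (t, x) ∈ N.flow := by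
  simp [PetriNet.postset]

lemma not_place_trans {N : PetriNet α} {x : α} (h1 : x ∈ N.places)
    (h2 : x ∈ N.transitions) : False :=
  Finset.disjoint_left.mp N.disjoint_pt h1 h2

lemma place_of_flow_to_trans {N : PetriNet α} {x t : α} (hf : (x, t) ∈ N.flow)
    (ht : t ∈ N.transitions) : x ∈ N.places := by
  rcases N.flow_mem _ hf with ⟨h1, _⟩ | ⟨_, h2⟩
  · exact h1
  · exact absurd ht (fun h => not_place_trans h2 h)

lemma trans_of_flow_from_place {N : PetriNet α} {p x : α} (hf : (p, x) ∈ N.flow)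
    (hp : p ∈ N.places) : x ∈ N.transitions := by
  rcases N.flow_mem _ hf with ⟨_, h2⟩ | ⟨h1, _⟩
  · exact h2
  · exact absurd hp (fun h => not_place_trans h h1)

lemma place_of_flow_from_trans {N : PetriNet α} {t x : α} (hf : (t, x) ∈ N.flow)
    (ht : t ∈ N.transitions) : x ∈ N.places := by
  rcases N.flow_mem _ hf with ⟨h1, _⟩ | ⟨_, h2⟩
  · exact absurd ht (fun h => not_place_trans h1 h)
  · exact h2

/-- Strict reachability along the flow. -/
def SR (N : PetriNet α) (a b : α) : Prop :=
  ∃ w, N.IsPath w ∧ 2 ≤ w.length ∧ w.head? = some a ∧ w.getLast? = some b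

lemma SR_trans {N : PetriNet α} {a b c : α} (h1 : SR N a b) (h2 : SR N b c) : SR N a c := by
  obtain ⟨w1, ⟨hne1, hmem1, hch1⟩, hl1, hh1, hlast1⟩ := h1
  obtain ⟨w2, ⟨hne2, hmem2, hch2⟩, hl2, hh2, hlast2⟩ := h2
  obtain ⟨x, w2', rfl⟩ := List.exists_cons_of_ne_nil hne2
  simp at hh2; subst hh2
  have hw2' : w2' ≠ [] := by
    intro h; subst h; simp at hl2
  refine ⟨w1 ++ w2', ⟨by simp [hne1], ?_, ?_⟩, ?_, ?_, ?_⟩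
  · intro z hz
    rcases List.mem_append.mp hz with h | h
    · exact hmem1 z h
    · exact hmem2 z (by simp [h])
  · refine List.IsChain.append hch1 hch2.tail ?_
    intro x1 hx1 y1 hy1
    rw [hlast1] at hx1
    simp at hx1; subst hx1
    exact (List.isChain_cons.mp hch2).1 y1 hy1
  · have := List.length_pos_iff.mpr hw2'
    simp; omega
  · rw [List.head?_append_of_ne_nil _ hne1]; exact hh1
  · rw [List.getLast?_append_of_ne_nil _ hw2']
    rw [← hlast2]
    obtain ⟨y, ys, rfl⟩ := List.exists_cons_of_ne_nil hw2'
    exact (List.getLast?_cons_cons ..).symm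

lemma SR_mem_nodes_right {N : PetriNet α} {a b : α} (h : SR N a b) : b ∈ N.nodes := by
  obtain ⟨w, ⟨hne, hmem, _⟩, _, _, hlast⟩ := h
  exact hmem b (List.mem_of_getLast? hlast)

open Classical in
/-- Rank: number of nodes strictly reachable from `p`; decreases along `SR`. -/
noncomputable def rk (N : PetriNet α) (p : α) : ℕ :=
  (N.nodes.filter (fun z => SR N p z)).card

lemma rk_lt {N : PetriNet α} (hacyc : N.Acyclic) {p r : α} (h : SR N p r) :
    rk N r < rk N p := by
  classical
  apply Finset.card_lt_card
  rw [Finset.ssubset_iff_of_subset]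
  · refine ⟨r, ?_, ?_⟩
    · simp only [Finset.mem_filter]
      exact ⟨SR_mem_nodes_right h, h⟩
    · simp only [Finset.mem_filter, not_and]
      intro _
      exact hacyc r
  · intro z hz
    simp only [Finset.mem_filter] at hz ⊢
    exact ⟨hz.1, SR_trans h hz.2⟩

lemma SR_two {N : PetriNet α} {p u r : α} (hp : p ∈ N.nodes) (hu : u ∈ N.nodes)
    (hr : r ∈ N.nodes) (h1 : (p, u) ∈ N.flow) (h2 : (u, r) ∈ N.flow) : SR N p r := by
  refine ⟨[p, u, r], ⟨by simp, ?_, ?_⟩, by simp, rfl, rfl⟩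
  · intro z hz; simp at hz; rcases hz with rfl | rfl | rfl <;> assumption
  · simp [List.Chain', List.isChain_cons_cons, h1, h2]


lemma countP_first_split {l : List α} {q : α → Bool} (h : 1 ≤ l.countP q) :
    ∃ l1 a l2, l = l1 ++ a :: l2 ∧ q a ∧ l1.countP q = 0 := by
  induction l with
  | nil => rw [List.countP_nil] at h; omega
  | cons x xs ih =>
      by_cases hx : q x
      · exact ⟨[], x, xs, rfl, hx, by simp⟩
      · rw [List.countP_cons, if_neg hx] at h
        obtain ⟨l1, a, l2, rfl, ha, hz⟩ := ih (by omega)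
        exact ⟨x :: l1, a, l2, rfl, ha, by rw [List.countP_cons, if_neg hx]; omega⟩

lemma one_le_deps_iff {N : PetriNet α} {p : α} {ts : List α} :
    1 ≤ deps N p ts ↔ ∃ t ∈ ts, p ∈ N.postset t := by
  rw [deps, show (1 ≤ ts.countP fun t => decide (p ∈ N.postset t)) ↔
    0 < ts.countP fun t => decide (p ∈ N.postset t) from Iff.rfl, List.countP_pos_iff]
  simp

lemma one_le_cns_iff {N : PetriNet α} {p : α} {ts : List α} :
    1 ≤ cns N p ts ↔ ∃ t ∈ ts, p ∈ N.preset t := by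
  rw [cns, show (1 ≤ ts.countP fun t => decide (p ∈ N.preset t)) ↔
    0 < ts.countP fun t => decide (p ∈ N.preset t) from Iff.rfl, List.countP_pos_iff]
  simp

lemma deps_eq_zero_of {N : PetriNet α} {p : α} {ts : List α}
    (h : ∀ t ∈ ts, p ∉ N.postset t) : deps N p ts = 0 := by
  rw [deps, List.countP_eq_zero]
  intro t ht
  simpa using h t ht

lemma cns_eq_zero_of {N : PetriNet α} {p : α} {ts : List α}
    (h : ∀ t ∈ ts, p ∉ N.preset t) : cns N p ts = 0 := by
  rw [cns, List.countP_eq_zero]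
  intro t ht
  simpa using h t ht

/-- Every transition of a workflow net has a successor. -/
lemma trans_postset_nonempty (W : WorkflowNet α) {t : α} (ht : t ∈ W.transitions) :
    ∃ r, r ∈ W.toPetriNet.postset t := by
  obtain ⟨w, ⟨hne, hmem, hch⟩, hh, hl, htw⟩ := W.all_on_path t (mem_nodes_of_trans ht)
  have htsink : t ≠ W.sink := fun h => not_place_trans (h ▸ W.sink_mem) ht
  obtain ⟨y, hy, hR⟩ := chain_succ hch htw hl htsink
  exact ⟨y, mem_postset_iff.mpr ⟨hmem y hy, hR⟩⟩

/-- Every transition of a workflow net has a predecessor. -/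
lemma trans_preset_nonempty (W : WorkflowNet α) {t : α} (ht : t ∈ W.transitions) :
    ∃ r, r ∈ W.toPetriNet.preset t := by
  obtain ⟨w, ⟨hne, hmem, hch⟩, hh, hl, htw⟩ := W.all_on_path t (mem_nodes_of_trans ht)
  have htsrc : t ≠ W.source := fun h => not_place_trans (h ▸ W.source_mem) ht
  obtain ⟨y, hy, hR⟩ := chain_pred hch htw hh htsrc
  exact ⟨y, mem_preset_iff.mpr ⟨hmem y hy, hR⟩⟩

lemma terminal_not_enabled (W : WorkflowNet α) (t : α) :
    ¬ W.toPetriNet.Enabled W.terminalMarking t := by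
  rintro ⟨ht, hall⟩
  obtain ⟨q, hq⟩ := trans_preset_nonempty W ht
  have h1 := hall q hq
  have hqs : q = W.sink := by
    by_contra h
    simp [WorkflowNet.terminalMarking, h] at h1
  subst hqs
  have : t ∈ W.toPetriNet.postset W.sink :=
    mem_postset_iff.mpr ⟨mem_nodes_of_trans ht, (mem_preset_iff.mp hq).2⟩
  rw [W.sink_no_post] at this
  exact absurd this (Finset.notMem_empty t)

lemma validRun_terminal (W : WorkflowNet α) {ts : List α}
    (h : ValidRun W.toPetriNet W.terminalMarking ts) : ts = [] := by
  cases ts with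
  | nil => rfl
  | cons t ts => exact absurd h.1 (terminal_not_enabled W t)

lemma deps_source_zero (W : WorkflowNet α) {M : α → ℕ} {ts : List α}
    (h : ValidRun W.toPetriNet M ts) : deps W.toPetriNet W.source ts = 0 := by
  apply deps_eq_zero_of
  intro t ht hmem
  have htr : t ∈ W.transitions := mem_run_trans _ h ht
  have : t ∈ W.toPetriNet.preset W.source :=
    mem_preset_iff.mpr ⟨mem_nodes_of_trans htr, (mem_postset_iff.mp hmem).2⟩
  rw [W.source_no_pre] at this
  exact absurd this (Finset.notMem_empty t)

lemma cns_sink_zero (W : WorkflowNet α) {M : α → ℕ} {ts : List α}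
    (h : ValidRun W.toPetriNet M ts) : cns W.toPetriNet W.sink ts = 0 := by
  apply cns_eq_zero_of
  intro t ht hmem
  have htr : t ∈ W.transitions := mem_run_trans _ h ht
  have : t ∈ W.toPetriNet.postset W.sink :=
    mem_postset_iff.mpr ⟨mem_nodes_of_trans htr, (mem_preset_iff.mp hmem).2⟩
  rw [W.sink_no_post] at this
  exact absurd this (Finset.notMem_empty t)

/-- Key lemma: in a sound acyclic free-choice workflow net, no place ever receives two
token deposits along a single run. -/
lemma noDouble (W : WorkflowNet α) (hfc : W.toPetriNet.FreeChoice)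
    (hacyc : W.toPetriNet.Acyclic) (hsound : W.Sound) :
    ∀ ts, ValidRun W.toPetriNet W.initialMarking ts →
      ∀ p, deps W.toPetriNet p ts ≤ 1 := by
  set N := W.toPetriNet with hN
  suffices H : ∀ n p, rk N p < n → ∀ ts, ValidRun N W.initialMarking ts →
      deps N p ts ≤ 1 by
    intro ts hv p
    exact H (rk N p + 1) p (Nat.lt_succ_self _) ts hv
  intro n
  induction n with
  | zero => intro p h; omega
  | succ n ih =>
    intro p hrk ts hv
    by_contra hdep
    have h2 : 2 ≤ deps N p ts := by omega
    -- p is a place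
    obtain ⟨t0, ht0mem, ht0⟩ := one_le_deps_iff.mp (show 1 ≤ deps N p ts by omega)
    have hp : p ∈ N.places :=
      place_of_flow_from_trans (mem_postset_iff.mp ht0).2 (mem_run_trans _ hv ht0mem)
    -- p is not the sink
    have hpsink : p ≠ W.sink := by
      intro hps
      have h1 : 1 ≤ deps N p ts := by omega
      obtain ⟨l1, t1, l2, hts, ht1, hl1⟩ := countP_first_split (l := ts)
        (q := fun t => decide (p ∈ N.postset t)) h1
      have ht1p : p ∈ N.postset t1 := of_decide_eq_true ht1
      have hdl1 : deps N p l1 = 0 := hl1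
      subst hts
      have hsplit : l1 ++ t1 :: l2 = (l1 ++ [t1]) ++ l2 := by simp
      rw [hsplit] at hv
      obtain ⟨hv1, hv2⟩ := (validRun_append N _ _ _).mp hv
      have heq := marking_eq N _ _ hv1 p
      have hcz : cns N p (l1 ++ [t1]) = 0 := by rw [hps]; exact cns_sink_zero W hv1
      have hdnil : deps N p ([] : List α) = 0 := rfl
      have hdz : deps N p (l1 ++ [t1]) = 1 := by
        rw [deps_append, deps_cons, hdl1, if_pos ht1p, hdnil]
      have hM1sink : 1 ≤ runMark N W.initialMarking (l1 ++ [t1]) W.sink := by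
        rw [← hps]; omega
      have hreach : N.Reachable W.initialMarking (runMark N W.initialMarking (l1 ++ [t1])) :=
        run_reachable N hv1
      have hterm : runMark N W.initialMarking (l1 ++ [t1]) = W.terminalMarking :=
        (hsound.1 _ hreach).2 hM1sink
      have hl2nil : l2 = [] := validRun_terminal W (hterm ▸ hv2)
      subst hl2nil
      rw [deps_append, deps_cons, hdl1, if_pos ht1p, hdnil] at h2
      omega
    -- complete the run
    set M := runMark N W.initialMarking ts with hM
    have hreach : N.Reachable W.initialMarking M := run_reachable N hv
    obtain ⟨ts2, hv2, hm2⟩ := (reachable_iff_run N M W.terminalMarking).mp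
      (hsound.1 M hreach).1
    have hvr : ValidRun N W.initialMarking (ts ++ ts2) :=
      (validRun_append N _ _ _).mpr ⟨hv, hv2⟩
    have hfinal : runMark N W.initialMarking (ts ++ ts2) = W.terminalMarking := by
      rw [runMark_append, ← hM, hm2]
    have hcns2 : 2 ≤ cns N p (ts ++ ts2) := by
      have heq := marking_eq N _ _ hvr p
      rw [hfinal] at heq
      have ht' : W.terminalMarking p = 0 := by
        simp [WorkflowNet.terminalMarking, hpsink]
      rw [deps_append] at heq
      omega
    obtain ⟨l1, u1, l2, u2, l3, hts, hu1, hu2⟩ := countP_two_split (l := ts ++ ts2)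
      (q := fun t => decide (p ∈ N.preset t)) hcns2
    have hu1p : p ∈ N.preset u1 := of_decide_eq_true hu1
    have hu2p : p ∈ N.preset u2 := of_decide_eq_true hu2
    have hu1mem : u1 ∈ ts ++ ts2 := by rw [hts]; simp
    have hu2mem : u2 ∈ ts ++ ts2 := by rw [hts]; simp
    have hu1tr : u1 ∈ N.transitions := mem_run_trans _ hvr hu1mem
    have hu2tr : u2 ∈ N.transitions := mem_run_trans _ hvr hu2mem
    have hpn : p ∈ N.nodes := mem_nodes_of_places hp
    -- in both cases we obtain a valid run in which u1 fires twice
    obtain ⟨σ, hvσ, hσ⟩ : ∃ σ, ValidRun N W.initialMarking σ ∧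
        ∀ r ∈ N.postset u1, 2 ≤ deps N r σ := by
      by_cases heq : u1 = u2
      · subst heq
        refine ⟨l1 ++ u1 :: (l2 ++ [u1]), ?_, ?_⟩
        · have : ts ++ ts2 = (l1 ++ u1 :: (l2 ++ [u1])) ++ l3 := by
            rw [hts]; simp
          rw [this] at hvr
          exact ((validRun_append N _ _ _).mp hvr).1
        · intro r hr
          rw [deps_append, deps_cons, deps_append, deps_cons, if_pos hr]
          omega
      · have hu1post : u1 ∈ N.postset p :=
          mem_postset_iff.mpr ⟨mem_nodes_of_trans hu1tr, (mem_preset_iff.mp hu1p).2⟩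
        have hu2post : u2 ∈ N.postset p :=
          mem_postset_iff.mpr ⟨mem_nodes_of_trans hu2tr, (mem_preset_iff.mp hu2p).2⟩
        have hcard : 1 < (N.postset p).card :=
          Finset.one_lt_card.mpr ⟨u1, hu1post, u2, hu2post, heq⟩
        have hpre1 : N.preset u1 = {p} := hfc p hp hcard u1 hu1post
        have hsplit : ts ++ ts2 = (l1 ++ u1 :: l2) ++ u2 :: l3 := by rw [hts]; simp
        rw [hsplit] at hvr
        obtain ⟨hvpre, hvpost⟩ := (validRun_append N _ _ _).mp hvr
        set M2 := runMark N W.initialMarking (l1 ++ u1 :: l2) with hM2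
        have hen2 : N.Enabled M2 u2 := hvpost.1
        have hM2p : 1 ≤ M2 p := hen2.2 p hu2p
        have hen1 : N.Enabled M2 u1 := by
          refine ⟨hu1tr, ?_⟩
          intro q hq
          rw [hpre1, Finset.mem_singleton] at hq
          subst hq
          exact hM2p
        refine ⟨(l1 ++ u1 :: l2) ++ [u1], ?_, ?_⟩
        · exact (validRun_append N _ _ _).mpr ⟨hvpre, hen1, trivial⟩
        · intro r hr
          rw [deps_append, deps_append, deps_cons, deps_cons, if_pos hr]
          omega
    obtain ⟨r, hr⟩ := trans_postset_nonempty W hu1tr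
    have hSR : SR N p r := SR_two hpn (mem_nodes_of_trans hu1tr)
      (mem_postset_iff.mp hr).1 (mem_preset_iff.mp hu1p).2 (mem_postset_iff.mp hr).2
    have hrk : rk N r < n := lt_of_lt_of_le (rk_lt hacyc hSR) (Nat.lt_succ_iff.mp hrk)
    have := ih r hrk σ hvσ
    have := hσ r hr
    omega


/-- Safety: every reachable marking of a sound acyclic free-choice workflow net is 1-safe. -/
lemma safe (W : WorkflowNet α) (hfc : W.toPetriNet.FreeChoice)
    (hacyc : W.toPetriNet.Acyclic) (hsound : W.Sound) {M : α → ℕ}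
    (h : W.toPetriNet.Reachable W.initialMarking M) (p : α) : M p ≤ 1 := by
  obtain ⟨ts, hv, rfl⟩ := (reachable_iff_run W.toPetriNet _ _).mp h
  have heq := marking_eq W.toPetriNet _ _ hv p
  have hnd := noDouble W hfc hacyc hsound ts hv p
  by_cases hps : p = W.source
  · have hdz : deps W.toPetriNet p ts = 0 := by rw [hps]; exact deps_source_zero W hv
    have hi : W.initialMarking p = 1 := by simp [WorkflowNet.initialMarking, hps]
    omega
  · have hi : W.initialMarking p = 0 := by simp [WorkflowNet.initialMarking, hps]
    omega

lemma fire_post_ge_one {N : PetriNet α} {M : α → ℕ} {u p : α} (h : p ∈ N.postset u) :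
    1 ≤ N.fire M u p := by
  simp only [PetriNet.fire, if_pos h]
  omega

/-- Pushing a token along a path: if `p` is marked and `s` (a place further along a path
from `p`) has already received a token, soundness is violated. -/
lemma pushQ (W : WorkflowNet α) (hfc : W.toPetriNet.FreeChoice)
    (hacyc : W.toPetriNet.Acyclic) (hsound : W.Sound) :
    ∀ n (w : List α), w.length ≤ n → W.toPetriNet.IsPath w → 2 ≤ w.length →
    ∀ p s, w.head? = some p → w.getLast? = some s → p ∈ W.places → s ∈ W.places →
    ∀ ts, ValidRun W.toPetriNet W.initialMarking ts →
      1 ≤ runMark W.toPetriNet W.initialMarking ts p →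
      1 ≤ deps W.toPetriNet s ts → False := by
  intro n
  induction n with
  | zero =>
    intro w hlen _ hl2
    omega
  | succ n ih =>
    intro w hlen hpath hl2 p s hh hlast hp hs ts hv hMp hdep
    obtain ⟨a, w', rfl⟩ := List.exists_cons_of_ne_nil hpath.1
    have hh' : p = a := by
      simp at hh
      exact hh.symm
    subst hh'
    cases w' with
    | nil => simp at hl2
    | cons u rest =>
      have hch := hpath.2.2
      rw [List.Chain', List.isChain_cons_cons] at hch
      obtain ⟨hpu, hch2⟩ := hch
      have hu_tr : u ∈ W.transitions := trans_of_flow_from_place hpu hp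
      have hu_post : u ∈ W.toPetriNet.postset p :=
        mem_postset_iff.mpr ⟨mem_nodes_of_trans hu_tr, hpu⟩
      cases rest with
      | nil =>
        simp at hlast
        exact not_place_trans (hlast ▸ hs) hu_tr
      | cons p' rest' =>
        have hup' : (u, p') ∈ W.toPetriNet.flow := (List.isChain_cons_cons.mp hch2).1
        have hp' : p' ∈ W.places := place_of_flow_from_trans hup' hu_tr
        have hp'post : p' ∈ W.toPetriNet.postset u :=
          mem_postset_iff.mpr ⟨mem_nodes_of_places hp', hup'⟩
        have hlast' : (p' :: rest').getLast? = some s := by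
          rw [← hlast, List.getLast?_cons_cons, List.getLast?_cons_cons]
        -- in both cases, obtain a valid extension firing `u`
        obtain ⟨l, hv3⟩ : ∃ l, ValidRun W.toPetriNet W.initialMarking ((ts ++ l) ++ [u]) := by
          by_cases hc : 2 ≤ (W.toPetriNet.postset p).card
          · have hpre := hfc p hp (by omega) u hu_post
            have hen : W.toPetriNet.Enabled (runMark W.toPetriNet W.initialMarking ts) u := by
              refine ⟨hu_tr, ?_⟩
              intro q hq
              rw [hpre, Finset.mem_singleton] at hq
              subst hq
              exact hMp
            exact ⟨[], by
              rw [List.append_nil]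
              exact (validRun_append _ _ _ _).mpr ⟨hv, hen, trivial⟩⟩
          · have huniq : ∀ v ∈ W.toPetriNet.postset p, v = u := by
              intro v hvp
              exact Finset.card_le_one.mp (by omega) v hvp u hu_post
            have hpsink : p ≠ W.sink := by
              intro hps
              rw [hps, W.sink_no_post] at hu_post
              exact absurd hu_post (Finset.notMem_empty u)
            obtain ⟨ts2, hv2, hm2⟩ := (reachable_iff_run W.toPetriNet _ W.terminalMarking).mp
              (hsound.1 _ (run_reachable W.toPetriNet hv)).1
            have hcns : 1 ≤ cns W.toPetriNet p ts2 := by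
              have heq := marking_eq W.toPetriNet _ _ hv2 p
              rw [hm2] at heq
              have ht' : W.terminalMarking p = 0 := by
                simp [WorkflowNet.terminalMarking, hpsink]
              omega
            obtain ⟨v, hvmem, hvpre⟩ := one_le_cns_iff.mp hcns
            have hvtr : v ∈ W.transitions := mem_run_trans _ hv2 hvmem
            have hvu : v = u := huniq v
              (mem_postset_iff.mpr ⟨mem_nodes_of_trans hvtr, (mem_preset_iff.mp hvpre).2⟩)
            subst hvu
            obtain ⟨la, lb, rfl⟩ := List.append_of_mem hvmem
            rw [show la ++ v :: lb = (la ++ [v]) ++ lb by simp] at hv2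
            have h4 := ((validRun_append _ _ _ _).mp hv2).1
            refine ⟨la, ?_⟩
            rw [List.append_assoc]
            exact (validRun_append _ _ _ _).mpr ⟨hv, h4⟩
        have hM3 : runMark W.toPetriNet W.initialMarking ((ts ++ l) ++ [u])
            = W.toPetriNet.fire (runMark W.toPetriNet W.initialMarking (ts ++ l)) u := by
          rw [runMark_append]
          rfl
        have hM3p' : 1 ≤ runMark W.toPetriNet W.initialMarking ((ts ++ l) ++ [u]) p' := by
          rw [hM3]
          exact fire_post_ge_one hp'post
        have hdep3 : 1 ≤ deps W.toPetriNet s ((ts ++ l) ++ [u]) := by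
          rw [deps_append, deps_append]
          omega
        have hsu : s ∉ W.toPetriNet.postset u := by
          intro hsu
          have hnd := noDouble W hfc hacyc hsound _ hv3 s
          rw [deps_append, deps_append, deps_cons, if_pos hsu] at hnd
          omega
        cases rest' with
        | nil =>
          simp at hlast'
          exact hsu (hlast' ▸ hp'post)
        | cons b rest'' =>
          have hlen' : (p' :: b :: rest'').length ≤ n := by
            have : (p :: u :: p' :: b :: rest'').length ≤ n + 1 := hlen
            simp at this ⊢
            omega
          have hpath' : W.toPetriNet.IsPath (p' :: b :: rest'') := by
            refine ⟨List.cons_ne_nil _ _, ?_, hch2.tail⟩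
            intro z hz
            refine hpath.2.1 z ?_
            simp at hz ⊢
            tauto
          exact ih (p' :: b :: rest'') hlen' hpath' (by simp) p' s rfl hlast' hp' hs
            ((ts ++ l) ++ [u]) hv3 hM3p' hdep3

/-- Monotonicity of the defining operator of the concurrency relation. -/
lemma concStep_mono (N : PetriNet α) (M₀ : α → ℕ) {R S : Set (α × α)} (h : R ⊆ S) :
    N.concStep M₀ R ⊆ N.concStep M₀ S := by
  rintro q ⟨h1, h2, h3, h4, h5⟩
  exact ⟨h1, h2, fun a b z hz => h (h3 a b z hz), fun a b z hz => h (h4 a b z hz),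
    fun a b z hz z' hz' => h (h5 a b z hz z' hz')⟩

lemma conc_postfix (N : PetriNet α) (M₀ : α → ℕ) :
    N.Concurrent M₀ ⊆ N.concStep M₀ (N.Concurrent M₀) := by
  rintro q hq
  obtain ⟨R, hR, hqR⟩ := hq
  exact concStep_mono N M₀ (fun z hz => Set.mem_sUnion.mpr ⟨R, hR, hz⟩) (hR hqR)

lemma mem_concurrent_of_postfix {N : PetriNet α} {M₀ : α → ℕ} {R : Set (α × α)}
    (hR : R ⊆ N.concStep M₀ R) {q : α × α} (hq : q ∈ R) : q ∈ N.Concurrent M₀ :=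
  Set.mem_sUnion.mpr ⟨R, hR, hq⟩

end CP

end Aux

set_option maxHeartbeats 2000000 in
/-- In a sound acyclic free-choice workflow net: for every transition `y`, every node `x`
concurrent with `y`, and every place `s ∈ y•`, there is no acyclic path from `x` to `s`
iff `x` and `s` are concurrent. -/
theorem case1_no_path_iff_concurrent {α : Type} [DecidableEq α] (W : WorkflowNet α)
    (hfc : W.toPetriNet.FreeChoice) (hacyc : W.toPetriNet.Acyclic) (hsound : W.Sound) :
    ∀ y ∈ W.transitions, ∀ x : α,
      (x, y) ∈ W.toPetriNet.Concurrent W.initialMarking →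
      ∀ s ∈ W.toPetriNet.postset y,
        (¬ W.toPetriNet.HasAcyclicPath x s ↔
          (x, s) ∈ W.toPetriNet.Concurrent W.initialMarking) := by
  intro y hy x hxy s hs
  obtain ⟨hne_xy, ⟨M, hM, hax, hay⟩, hC1, hC2, hC3⟩ :=
    CP.conc_postfix W.toPetriNet W.initialMarking hxy
  dsimp only at hne_xy hax hay hC1 hC2 hC3
  have hsflow : (y, s) ∈ W.toPetriNet.flow := (CP.mem_postset_iff.mp hs).2
  have hsplace : s ∈ W.places := CP.place_of_flow_from_trans hsflow hy
  have hyen : W.toPetriNet.Enabled M y := by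
    rcases hay with ⟨hyp, _⟩ | ⟨_, hen⟩
    · exact (CP.not_place_trans hyp hy).elim
    · exact hen
  have hys_ne : y ≠ s := fun h => CP.not_place_trans hsplace (h ▸ hy)
  constructor
  · -- no acyclic path from x to s implies concurrency
    intro hnp
    have hxs_ne : x ≠ s := by
      rintro rfl
      have hxnode : x ∈ W.toPetriNet.nodes := by
        rcases hax with ⟨hxp, _⟩ | ⟨hxt, _⟩
        · exact CP.mem_nodes_of_places hxp
        · exact CP.mem_nodes_of_trans hxt
      exact hnp ⟨[x], ⟨⟨by simp, by simpa using hxnode, List.isChain_singleton _⟩, by simp⟩, rfl, rfl⟩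
    have hM' : W.toPetriNet.Reachable W.initialMarking (W.toPetriNet.fire M y) :=
      hM.tail ⟨y, hyen, rfl⟩
    have hM's : 1 ≤ W.toPetriNet.fire M y s := by
      simp only [PetriNet.fire, if_pos hs]
      by_cases h : s ∈ W.toPetriNet.preset y
      · have := hyen.2 s h
        rw [if_pos h]
        omega
      · rw [if_neg h]
        omega
    rcases hax with ⟨hxp, hxm⟩ | ⟨hxt, hxen⟩
    · -- x is a place
      have hxpre : x ∉ W.toPetriNet.preset y := by
        intro hxpre
        refine hnp ⟨[x, y, s], ⟨⟨by simp, ?_, ?_⟩, ?_⟩, rfl, rfl⟩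
        · intro z hz
          simp at hz
          rcases hz with rfl | rfl | rfl
          · exact CP.mem_nodes_of_places hxp
          · exact CP.mem_nodes_of_trans hy
          · exact CP.mem_nodes_of_places hsplace
        · simp [List.Chain', List.isChain_cons_cons, (CP.mem_preset_iff.mp hxpre).2, hsflow]
        · simp [hne_xy, hxs_ne, hys_ne]
      have hM'x : 1 ≤ W.toPetriNet.fire M y x := by
        simp only [PetriNet.fire, if_neg hxpre]
        split <;> omega
      set R : Set (α × α) :=
        {q | q ∈ W.toPetriNet.Concurrent W.initialMarking ∨ q = (x, s) ∨ q = (s, x)} with hR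
      have hRpost : R ⊆ W.toPetriNet.concStep W.initialMarking R := by
        rintro q (hq | rfl | rfl)
        · exact CP.concStep_mono _ _ (fun z hz => Or.inl hz)
            (CP.conc_postfix _ _ hq)
        · exact ⟨hxs_ne, ⟨_, hM', Or.inl ⟨hxp, hM'x⟩, Or.inl ⟨hsplace, hM's⟩⟩,
            fun hxt => (CP.not_place_trans hxp hxt).elim,
            fun _ hst => (CP.not_place_trans hsplace hst).elim,
            fun hxt => (CP.not_place_trans hxp hxt).elim⟩
        · exact ⟨hxs_ne.symm, ⟨_, hM', Or.inl ⟨hsplace, hM's⟩, Or.inl ⟨hxp, hM'x⟩⟩,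
            fun hst => (CP.not_place_trans hsplace hst).elim,
            fun _ hxt => (CP.not_place_trans hxp hxt).elim,
            fun hst => (CP.not_place_trans hsplace hst).elim⟩
      exact CP.mem_concurrent_of_postfix hRpost (Or.inr (Or.inl rfl))
    · -- x is a transition
      have hdisj : ∀ z ∈ W.toPetriNet.preset x, z ∉ W.toPetriNet.preset y := by
        intro z hzx hzy
        have hzz := CP.conc_postfix W.toPetriNet W.initialMarking
          (hC3 hxt hy z hzx z hzy)
        exact hzz.1 rfl
      have hsx : s ∉ W.toPetriNet.preset x := by
        intro hsx
        have hMs : 1 ≤ M s := hxen.2 s hsx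
        have h2 : 2 ≤ W.toPetriNet.fire M y s := by
          simp only [PetriNet.fire, if_pos hs, if_neg (hdisj s hsx)]
          omega
        have := CP.safe W hfc hacyc hsound hM' s
        omega
      have hM'z : ∀ z ∈ W.toPetriNet.preset x, 1 ≤ W.toPetriNet.fire M y z := by
        intro z hz
        have h1 := hxen.2 z hz
        simp only [PetriNet.fire, if_neg (hdisj z hz)]
        split <;> omega
      have hen' : W.toPetriNet.Enabled (W.toPetriNet.fire M y) x :=
        ⟨hxt, fun z hz => hM'z z hz⟩
      have hzplace : ∀ z ∈ W.toPetriNet.preset x, z ∈ W.places := by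
        intro z hz
        exact CP.place_of_flow_to_trans (CP.mem_preset_iff.mp hz).2 hxt
      set R : Set (α × α) :=
        {q | q ∈ W.toPetriNet.Concurrent W.initialMarking ∨ q = (x, s) ∨ q = (s, x) ∨
          ∃ z ∈ W.toPetriNet.preset x, q = (z, s) ∨ q = (s, z)} with hR
      have hRpost : R ⊆ W.toPetriNet.concStep W.initialMarking R := by
        rintro q (hq | rfl | rfl | ⟨z, hz, rfl | rfl⟩)
        · exact CP.concStep_mono _ _ (fun z hz => Or.inl hz)
            (CP.conc_postfix _ _ hq)
        · refine ⟨hxs_ne, ⟨_, hM', Or.inr ⟨hxt, hen'⟩, Or.inl ⟨hsplace, hM's⟩⟩,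
            ?_, ?_, ?_⟩
          · intro _ _ z hz
            exact Or.inr (Or.inr (Or.inr ⟨z, hz, Or.inl rfl⟩))
          · intro hxp
            exact (CP.not_place_trans hxp hxt).elim
          · intro _ hst
            exact (CP.not_place_trans hsplace hst).elim
        · refine ⟨hxs_ne.symm, ⟨_, hM', Or.inl ⟨hsplace, hM's⟩, Or.inr ⟨hxt, hen'⟩⟩,
            ?_, ?_, ?_⟩
          · intro hst
            exact (CP.not_place_trans hsplace hst).elim
          · intro _ _ z hz
            exact Or.inr (Or.inr (Or.inr ⟨z, hz, Or.inl rfl⟩))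
          · intro hst
            exact (CP.not_place_trans hsplace hst).elim
        · have hzp := hzplace z hz
          have hzs : z ≠ s := fun h => hsx (h ▸ hz)
          exact ⟨hzs, ⟨_, hM', Or.inl ⟨hzp, hM'z z hz⟩, Or.inl ⟨hsplace, hM's⟩⟩,
            fun hzt => (CP.not_place_trans hzp hzt).elim,
            fun _ hst => (CP.not_place_trans hsplace hst).elim,
            fun hzt => (CP.not_place_trans hzp hzt).elim⟩
        · have hzp := hzplace z hz
          have hzs : z ≠ s := fun h => hsx (h ▸ hz)
          exact ⟨hzs.symm, ⟨_, hM', Or.inl ⟨hsplace, hM's⟩, Or.inl ⟨hzp, hM'z z hz⟩⟩,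
            fun hst => (CP.not_place_trans hsplace hst).elim,
            fun _ hzt => (CP.not_place_trans hzp hzt).elim,
            fun hst => (CP.not_place_trans hsplace hst).elim⟩
      exact CP.mem_concurrent_of_postfix hRpost (Or.inr (Or.inl rfl))
  · -- concurrency implies no acyclic path from x to s
    intro hxs
    rintro ⟨w, ⟨hwpath, hwnodup⟩, hwh, hwl⟩
    obtain ⟨hne_xs, ⟨M2, hM2, hax2, has2⟩, _, _, _⟩ :=
      CP.conc_postfix W.toPetriNet W.initialMarking hxs
    dsimp only at hne_xs hax2 has2
    have hM2s : 1 ≤ M2 s := by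
      rcases has2 with ⟨_, h⟩ | ⟨hst, _⟩
      · exact h
      · exact (CP.not_place_trans hsplace hst).elim
    obtain ⟨ts, hv, rfl⟩ := (CP.reachable_iff_run W.toPetriNet _ _).mp hM2
    -- s is not the source
    have hsw : s ∈ w := List.mem_of_getLast? hwl
    obtain ⟨z, hzw, hzs⟩ := CP.chain_pred hwpath.2.2 hsw hwh (Ne.symm hne_xs)
    have hssrc : s ≠ W.source := by
      intro h
      have : z ∈ W.toPetriNet.preset s :=
        CP.mem_preset_iff.mpr ⟨hwpath.2.1 z hzw, hzs⟩
      rw [h, W.source_no_pre] at this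
      exact absurd this (Finset.notMem_empty z)
    have hdep : 1 ≤ CP.deps W.toPetriNet s ts := by
      have heq := CP.marking_eq W.toPetriNet _ _ hv s
      have hi : W.initialMarking s = 0 := by simp [WorkflowNet.initialMarking, hssrc]
      omega
    -- w has length at least 2
    obtain ⟨a, w', rfl⟩ := List.exists_cons_of_ne_nil hwpath.1
    have hh' : x = a := by
      simp at hwh
      exact hwh.symm
    subst hh'
    have hlen2 : 2 ≤ (x :: w').length := by
      cases w' with
      | nil => simp at hwl; exact absurd hwl hne_xs
      | cons b l => simp
    rcases hax2 with ⟨hxp, hxm⟩ | ⟨hxt, hxen⟩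
    · exact CP.pushQ W hfc hacyc hsound (x :: w').length (x :: w') le_rfl hwpath hlen2
        x s rfl hwl hxp hsplace ts hv hxm hdep
    · cases w' with
      | nil => simp at hwl; exact absurd hwl hne_xs
      | cons p₀ rest =>
        have hch := hwpath.2.2
        rw [List.Chain', List.isChain_cons_cons] at hch
        obtain ⟨hxp₀, hch2⟩ := hch
        have hp₀ : p₀ ∈ W.places := CP.place_of_flow_from_trans hxp₀ hxt
        have hp₀post : p₀ ∈ W.toPetriNet.postset x :=
          CP.mem_postset_iff.mpr ⟨CP.mem_nodes_of_places hp₀, hxp₀⟩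
        have hv3 : CP.ValidRun W.toPetriNet W.initialMarking (ts ++ [x]) :=
          (CP.validRun_append _ _ _ _).mpr ⟨hv, hxen, trivial⟩
        have hsx : s ∉ W.toPetriNet.postset x := by
          intro hsx
          have hnd := CP.noDouble W hfc hacyc hsound _ hv3 s
          rw [CP.deps_append, CP.deps_cons, if_pos hsx] at hnd
          omega
        have hM3p₀ : 1 ≤ CP.runMark W.toPetriNet W.initialMarking (ts ++ [x]) p₀ := by
          rw [CP.runMark_append]
          exact CP.fire_post_ge_one hp₀post
        have hdep3 : 1 ≤ CP.deps W.toPetriNet s (ts ++ [x]) := by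
          rw [CP.deps_append]
          omega
        cases rest with
        | nil =>
          simp at hwl
          exact hsx (hwl ▸ hp₀post)
        | cons b rest' =>
          have hwl' : (p₀ :: b :: rest').getLast? = some s := by
            rw [← hwl]
            exact (List.getLast?_cons_cons ..).symm
          have hpath' : W.toPetriNet.IsPath (p₀ :: b :: rest') :=
            ⟨List.cons_ne_nil _ _,
              fun z' hz' => hwpath.2.1 z' (List.mem_cons_of_mem x hz'), hch2⟩
          exact CP.pushQ W hfc hacyc hsound (p₀ :: b :: rest').length (p₀ :: b :: rest')
            le_rfl hpath' (by simp) p₀ s rfl hwl' hp₀ hsplace (ts ++ [x]) hv3 hM3p₀ hdep3
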